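/- arXiv:2009.03979 — 2 statements merged into one kernel-verified Lean document; each statement's English description precedes it below -/
import Mathlib

section
/- Let X be an n×p matrix with all entries in [0,1], and let X_R be the matrix obtained by replacing each row of X with its assigned exemplar row, where each row is within Euclidean distance r of its exemplar. Then for all i, j, |d(X(i,:), X(j,:))^2 − d(X_R(i,:), X_R(j,:))^2| ≤ 4√p · r. -/
lemma cube_dist_le (p : ℕ) (u v : EuclideanSpace ℝ (Fin p))
    (hu : ∀ k, u k ∈ Set.Icc (0:ℝ) 1) (hv : ∀ k, v k ∈ Set.Icc (0:ℝ) 1) :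
    dist u v ≤ Real.sqrt p := by
  rw [EuclideanSpace.dist_eq]
  apply Real.sqrt_le_sqrt
  calc ∑ k, dist (u k) (v k) ^ 2 ≤ ∑ _k : Fin p, (1:ℝ) := by
        apply Finset.sum_le_sum
        intro k _
        have h1 : |u k - v k| ≤ 1 := by
          obtain ⟨h1, h2⟩ := hu k
          obtain ⟨h3, h4⟩ := hv k
          rw [abs_le]; constructor <;> linarith
        calc dist (u k) (v k) ^ 2 = |u k - v k| ^ 2 := by rw [Real.dist_eq]
          _ ≤ 1 ^ 2 := by
              apply pow_le_pow_left₀ (abs_nonneg _) h1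
          _ = 1 := one_pow 2
    _ = p := by simp

theorem row_sketch_sq_dist_error (n p : ℕ) (r : ℝ) (hr : 0 ≤ r)
    (X XR : Fin n → EuclideanSpace ℝ (Fin p))
    (hX : ∀ i k, X i k ∈ Set.Icc (0 : ℝ) 1)
    (hrow : ∀ i, ∃ i', XR i = X i')
    (hnear : ∀ i, dist (X i) (XR i) ≤ r) :
    ∀ i j, |dist (X i) (X j) ^ 2 - dist (XR i) (XR j) ^ 2| ≤ 4 * Real.sqrt p * r := by
  intro i j
  obtain ⟨i', hi'⟩ := hrow i
  obtain ⟨j', hj'⟩ := hrow j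
  set a := dist (X i) (X j) with ha
  set b := dist (XR i) (XR j) with hb
  have ha0 : 0 ≤ a := dist_nonneg
  have hb0 : 0 ≤ b := dist_nonneg
  have haP : a ≤ Real.sqrt p := cube_dist_le p _ _ (hX i) (hX j)
  have hbP : b ≤ Real.sqrt p := by
    rw [hb, hi', hj']; exact cube_dist_le p _ _ (hX i') (hX j')
  have hdd : |a - b| ≤ 2 * r := by
    have h := dist_dist_dist_le (X i) (X j) (XR i) (XR j)
    rw [Real.dist_eq] at h
    have := hnear i
    have := hnear j
    calc |a - b| ≤ dist (X i) (XR i) + dist (X j) (XR j) := h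
      _ ≤ 2 * r := by linarith
  have key : |a ^ 2 - b ^ 2| = (a + b) * |a - b| := by
    rw [← abs_of_nonneg (add_nonneg ha0 hb0), ← abs_mul]
    ring_nf
  rw [key]
  calc (a + b) * |a - b| ≤ (Real.sqrt p + Real.sqrt p) * (2 * r) :=
        mul_le_mul (by linarith) hdd (abs_nonneg _) (by positivity)
    _ = 4 * Real.sqrt p * r := by ring
end

section
/- Total row-sketch error bound: with n points in [0,1]^p, K(r) exemplars, and each point within distance r of its exemplar, the sum over all ordered pairs (i,j) of |d(x_i,x_j)² − d(e_i,e_j)²| is at most 4√p·r·(n − K(r))·(n − 1), where e_i is the exemplar of x_i. -/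
open scoped Classical
theorem total_row_sketch_error (n p : ℕ) (r : ℝ) (hr : 0 ≤ r)
    (x e : Fin n → EuclideanSpace ℝ (Fin p))
    (hx : ∀ i k, x i k ∈ Set.Icc (0 : ℝ) 1)
    (hexemplar : ∀ i, ∃ j, e i = x j)
    (hnear : ∀ i, dist (x i) (e i) ≤ r)
    (hfix : ∀ i, (∃ j, x i = e j) → e i = x i)
    (K : ℕ) (hK : K = (Finset.univ.image e).card) :
    ∑ i : Fin n, ∑ j : Fin n, |dist (x i) (x j) ^ 2 - dist (e i) (e j) ^ 2| ≤
      4 * Real.sqrt p * r * ((n : ℝ) - K) * ((n : ℝ) - 1) := by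
  rcases Nat.eq_zero_or_pos n with hn | hn
  · subst hn
    simp [hK, Finset.univ_eq_empty]
  -- cube diameter bound
  have hcube : ∀ a b : EuclideanSpace ℝ (Fin p),
      (∀ k, a k ∈ Set.Icc (0:ℝ) 1) → (∀ k, b k ∈ Set.Icc (0:ℝ) 1) →
      dist a b ≤ Real.sqrt p := by
    intro a b ha hb
    rw [EuclideanSpace.dist_eq]
    apply Real.sqrt_le_sqrt
    calc ∑ k, dist (a k) (b k) ^ 2 ≤ ∑ k : Fin p, 1 := by
          apply Finset.sum_le_sum
          intro k _
          have h1 : |a k - b k| ≤ 1 := by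
            rw [abs_le]
            constructor <;> nlinarith [(ha k).1, (ha k).2, (hb k).1, (hb k).2]
          have : dist (a k) (b k) = |a k - b k| := Real.dist_eq _ _
          rw [this]
          nlinarith [abs_nonneg (a k - b k)]
      _ = (p : ℝ) := by simp
  set δ : Fin n → ℝ := fun i => dist (x i) (e i) with hδ
  have hδ0 : ∀ i, 0 ≤ δ i := fun i => dist_nonneg
  have he_cube : ∀ i k, e i k ∈ Set.Icc (0:ℝ) 1 := by
    intro i k
    obtain ⟨j, hj⟩ := hexemplar i
    rw [hj]; exact hx j k
  have key : ∀ i j, |dist (x i) (x j) ^ 2 - dist (e i) (e j) ^ 2| ≤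
      2 * Real.sqrt p * (δ i + δ j) := by
    intro i j
    set a := dist (x i) (x j)
    set b := dist (e i) (e j)
    have hab : |a - b| ≤ δ i + δ j := by
      rw [abs_sub_le_iff]
      constructor
      · have := dist_triangle4 (x i) (e i) (e j) (x j)
        have h2 : dist (e j) (x j) = δ j := dist_comm _ _
        simp only [hδ] at *
        linarith
      · have := dist_triangle4 (e i) (x i) (x j) (e j)
        have h2 : dist (e i) (x i) = δ i := dist_comm _ _
        simp only [hδ] at *
        linarith
    have hsum : a + b ≤ 2 * Real.sqrt p := by
      have h1 : a ≤ Real.sqrt p := hcube _ _ (hx i) (hx j)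
      have h2 : b ≤ Real.sqrt p := hcube _ _ (he_cube i) (he_cube j)
      linarith
    have hfact : a ^ 2 - b ^ 2 = (a - b) * (a + b) := by ring
    rw [hfact, abs_mul]
    have habs : |a + b| = a + b := abs_of_nonneg (by positivity)
    rw [habs]
    calc |a - b| * (a + b) ≤ (δ i + δ j) * (2 * Real.sqrt p) := by
          apply mul_le_mul hab hsum (by positivity)
          linarith [hδ0 i, hδ0 j]
      _ = 2 * Real.sqrt p * (δ i + δ j) := by ring
  set S : ℝ := ∑ i, δ i with hS
  have hS0 : 0 ≤ S := Finset.sum_nonneg fun i _ => hδ0 i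
  -- step 1: LHS ≤ ∑∑ ite
  have step1 : ∑ i : Fin n, ∑ j : Fin n, |dist (x i) (x j) ^ 2 - dist (e i) (e j) ^ 2| ≤
      ∑ i : Fin n, ∑ j : Fin n, (if i = j then 0 else 2 * Real.sqrt p * (δ i + δ j)) := by
    apply Finset.sum_le_sum; intro i _
    apply Finset.sum_le_sum; intro j _
    by_cases h : i = j
    · simp [h]
    · simp only [if_neg h]; exact key i j
  -- step 2: evaluate the ite sum
  have step2 : ∑ i : Fin n, ∑ j : Fin n, (if i = j then 0 else 2 * Real.sqrt p * (δ i + δ j)) =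
      2 * Real.sqrt p * (2 * ((n : ℝ) - 1) * S) := by
    have inner : ∀ i : Fin n, ∑ j : Fin n, (if i = j then 0 else 2 * Real.sqrt p * (δ i + δ j)) =
        2 * Real.sqrt p * ((n : ℝ) * δ i + S - 2 * δ i) := by
      intro i
      have : ∀ j : Fin n, (if i = j then 0 else 2 * Real.sqrt p * (δ i + δ j)) =
          2 * Real.sqrt p * (δ i + δ j) - (if i = j then 2 * Real.sqrt p * (δ i + δ j) else 0) := by
        intro j; by_cases h : i = j <;> simp [h]
      rw [Finset.sum_congr rfl fun j _ => this j, Finset.sum_sub_distrib,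
        Finset.sum_ite_eq, if_pos (Finset.mem_univ i)]
      have h2 : ∑ j : Fin n, 2 * Real.sqrt p * (δ i + δ j)
          = 2 * Real.sqrt p * ((n : ℝ) * δ i + S) := by
        rw [← Finset.mul_sum, Finset.sum_add_distrib]
        simp only [Finset.sum_const, Finset.card_univ, Fintype.card_fin, nsmul_eq_mul, ← hS]
      rw [h2]; ring
    rw [Finset.sum_congr rfl fun i _ => inner i, ← Finset.mul_sum]
    have : ∑ i : Fin n, ((n : ℝ) * δ i + S - 2 * δ i) = 2 * ((n : ℝ) - 1) * S := by
      rw [Finset.sum_sub_distrib, Finset.sum_add_distrib, ← Finset.mul_sum, ← Finset.mul_sum]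
      simp only [Finset.sum_const, Finset.card_univ, Fintype.card_fin, nsmul_eq_mul, ← hS]
      ring
    rw [this]
  -- step 3: S ≤ (n - K) * r
  have hKT : (K : ℝ) ≤ (Finset.univ.filter (fun i => e i = x i)).card := by
    set T := Finset.univ.filter (fun i : Fin n => e i = x i) with hT
    have : (Finset.univ.image e).card ≤ T.card := by
      haveI : Inhabited (Fin n) := ⟨⟨0, hn⟩⟩
      set f : EuclideanSpace ℝ (Fin p) → Fin n := fun v =>
        if h : ∃ j, x j = v ∧ e j = x j then h.choose else default with hf
      have hprop : ∀ v ∈ Finset.univ.image e, ∃ j, x j = v ∧ e j = x j := by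
        intro v hv
        obtain ⟨i, _, hi⟩ := Finset.mem_image.mp hv
        obtain ⟨j, hj⟩ := hexemplar i
        have hfj : e j = x j := hfix j ⟨i, hj.symm⟩
        exact ⟨j, by rw [← hj, hi], hfj⟩
      apply Finset.card_le_card_of_injOn f
      · intro v hv
        have h := hprop v hv
        rw [hf]; simp only [dif_pos h]
        exact Finset.mem_filter.mpr ⟨Finset.mem_univ _, h.choose_spec.2⟩
      · intro u hu v hv huv
        have hu' := hprop u hu
        have hv' := hprop v hv
        simp only [hf, dif_pos hu', dif_pos hv'] at huv
        rw [← hu'.choose_spec.1, ← hv'.choose_spec.1, huv]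
    rw [hK]
    exact_mod_cast this
  have hScard : S ≤ ((n : ℝ) - K) * r := by
    set T := Finset.univ.filter (fun i : Fin n => e i = x i) with hT
    have hTn : T.card ≤ n := by
      calc T.card ≤ (Finset.univ : Finset (Fin n)).card := Finset.card_le_card (Finset.filter_subset _ _)
        _ = n := by simp
    have hδT : ∀ i ∈ T, δ i = 0 := by
      intro i hi
      have := (Finset.mem_filter.mp hi).2
      simp [hδ, this]
    have hsplit : S = ∑ i ∈ Finset.univ \ T, δ i := by
      rw [hS, ← Finset.sum_sdiff (Finset.subset_univ T)]
      rw [Finset.sum_eq_zero hδT]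
      ring
    calc S = ∑ i ∈ Finset.univ \ T, δ i := hsplit
      _ ≤ ∑ i ∈ Finset.univ \ T, r := Finset.sum_le_sum fun i _ => hnear i
      _ = ((Finset.univ \ T).card : ℝ) * r := by rw [Finset.sum_const, nsmul_eq_mul]
      _ ≤ ((n : ℝ) - K) * r := by
          apply mul_le_mul_of_nonneg_right _ hr
          have hcd : (Finset.univ \ T).card = n - T.card := by
            rw [Finset.card_sdiff_of_subset (Finset.subset_univ T), Finset.card_univ,
              Fintype.card_fin]
          rw [hcd, Nat.cast_sub hTn]
          linarith [hKT]
  have hn1 : (1 : ℝ) ≤ (n : ℝ) := by exact_mod_cast hn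
  have hsqrt : 0 ≤ Real.sqrt p := Real.sqrt_nonneg _
  calc ∑ i : Fin n, ∑ j : Fin n, |dist (x i) (x j) ^ 2 - dist (e i) (e j) ^ 2|
      ≤ 2 * Real.sqrt p * (2 * ((n : ℝ) - 1) * S) := by rw [← step2] at *; exact step1
    _ ≤ 2 * Real.sqrt p * (2 * ((n : ℝ) - 1) * (((n : ℝ) - K) * r)) := by
        apply mul_le_mul_of_nonneg_left _ (by positivity)
        apply mul_le_mul_of_nonneg_left hScard (by linarith)
    _ = 4 * Real.sqrt p * r * ((n : ℝ) - K) * ((n : ℝ) - 1) := by ring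
end
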